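/- arXiv:1102.3577 — 2 statements merged into one kernel-verified Lean document; each statement's English description precedes it below -/
import Mathlib

section
/- Let δ > 0 and let (N_j)_{j≥1} be a strictly increasing sequence of positive integers. If a closed set E ⊆ 𝕋 satisfies E ⊆ A(N_j, δ) for every j, then E is a parisian set. -/
open MeasureTheory Filter Metric Set
open scoped Topology

noncomputable section

instance : Fact ((0:ℝ) < 2) := ⟨two_pos⟩

/-- The circle `𝕋 = ℝ/2ℤ`. -/
abbrev Circle2 := AddCircle (2 : ℝ)

/-- Integral of `f` against a complex measure, defined via the Jordan decompositions of the
real and imaginary parts. -/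
def cmIntegral (μ : ComplexMeasure Circle2) (f : Circle2 → ℂ) : ℂ :=
  ((∫ x, f x ∂μ.re.toJordanDecomposition.posPart) -
      ∫ x, f x ∂μ.re.toJordanDecomposition.negPart) +
    Complex.I * ((∫ x, f x ∂μ.im.toJordanDecomposition.posPart) -
      ∫ x, f x ∂μ.im.toJordanDecomposition.negPart)

/-- The Fourier coefficient `μ̂(n) = (1/2) ∫_𝕋 e^{iπnx} dμ(x)`; here `fourier n x = exp (iπnx)`
on `AddCircle 2`. -/
def cmFourierCoeff (μ : ComplexMeasure Circle2) (n : ℤ) : ℂ :=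
  (1 / 2 : ℂ) * cmIntegral μ (fun x => fourier n x)

/-- The support of the Fourier transform of `μ`. -/
def fourierSupport (μ : ComplexMeasure Circle2) : Set ℤ := {n | cmFourierCoeff μ n ≠ 0}

/-- A positive measure with the same null sets as the total variation `|μ|`. -/
def cmVariation (μ : ComplexMeasure Circle2) : Measure Circle2 :=
  μ.re.totalVariation + μ.im.totalVariation

/-- `μ` is concentrated on `E`, i.e. `|μ|(𝕋 ∖ E) = 0`. -/
def ConcentratedOn (μ : ComplexMeasure Circle2) (E : Set Circle2) : Prop :=
  cmVariation μ Eᶜ = 0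

/-- `Λ ⊆ ℤ` is a Rajchman set. -/
def IsRajchman (Λ : Set ℤ) : Prop :=
  ∀ μ : ComplexMeasure Circle2,
    Tendsto (cmFourierCoeff μ) (Filter.cofinite ⊓ Filter.principal Λᶜ) (nhds 0) →
    Tendsto (cmFourierCoeff μ) (Filter.cofinite ⊓ Filter.principal Λ) (nhds 0)

/-- `Λ ⊆ ℤ` is a Riesz set. -/
def IsRiesz (Λ : Set ℤ) : Prop :=
  ∀ μ : ComplexMeasure Circle2, fourierSupport μ ⊆ Λ →
    μ ≪ᵥ (volume : Measure Circle2).toENNRealVectorMeasure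

/-- `E ⊆ 𝕋` is a parisian set. -/
def IsParisian (E : Set Circle2) : Prop :=
  ∀ μ : ComplexMeasure Circle2, ConcentratedOn μ E →
    ¬ μ ≪ᵥ (volume : Measure Circle2).toENNRealVectorMeasure →
    ¬ IsRajchman (fourierSupport μ)

/-- `Ω((n_j)) = {∑ ε_j n_j : ε_j ∈ {-1,0,1}, finitely many nonzero}`. -/
def Omega (n : ℕ → ℤ) : Set ℤ :=
  {k | ∃ (F : Finset ℕ) (ε : ℕ → ℤ),
    (∀ j, ε j = -1 ∨ ε j = 0 ∨ ε j = 1) ∧ k = ∑ j ∈ F, ε j * n j}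

/-- The image of `(2/N)ℤ` in `𝕋`. -/
def grid (N : ℕ) : Set Circle2 := Set.range fun k : ℤ => ((2 * k / N : ℝ) : Circle2)

/-- `A(N,δ)`: the points of `𝕋` within distance `1/(2N^{1+δ})` of `(2/N)ℤ`. -/
def nbhdGrid (N : ℕ) (δ : ℝ) : Set Circle2 :=
  {x | Metric.infDist x (grid N) ≤ 1 / (2 * (N : ℝ) ^ ((1 : ℝ) + δ))}

/-- `Ẽ = {x ∈ 𝕋 : sup_j N_j^{1+δ}·dist(x, (2/N_j)ℤ) < ∞}`. -/
def Etilde (N : ℕ → ℕ) (δ : ℝ) : Set Circle2 :=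
  {x | ∃ C : ℝ, ∀ j, (N j : ℝ) ^ ((1 : ℝ) + δ) * Metric.infDist x (grid (N j)) ≤ C}

/-- The total variation norm `‖μ‖` of a complex measure, as the supremum of
`∑ |μ(B i)|` over finite disjoint families of measurable sets. -/
def cmNorm (μ : ComplexMeasure Circle2) : ℝ :=
  sSup {r : ℝ | ∃ (n : ℕ) (B : Fin n → Set Circle2), (∀ i, MeasurableSet (B i)) ∧
    (∀ i j, i ≠ j → Disjoint (B i) (B j)) ∧ r = ∑ i, ‖μ (B i)‖}

/-- Fourier coefficient of a positive measure. -/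
def posFourierCoeff (μ : Measure Circle2) (n : ℤ) : ℂ :=
  (1 / 2 : ℂ) * ∫ x, fourier n x ∂μ



open Real in
lemma chord_bound (m : ℕ) (z : Circle2) (h : π * m * ‖z‖ ≤ 1) :
    ‖fourier (m : ℤ) z - 1‖ ≤ 2 * (π * m * ‖z‖) := by
  induction z using QuotientAddGroup.induction_on with
  | H a =>
    obtain ⟨b, hzb, hnorm⟩ : ∃ b : ℝ, ((b : ℝ) : Circle2) = ((a : ℝ) : Circle2) ∧
        ‖((a : ℝ) : Circle2)‖ = |b| := by
      refine ⟨a - (round ((2:ℝ)⁻¹ * a) : ℝ) * 2, ?_, AddCircle.norm_eq 2⟩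
      have hmem : (round ((2:ℝ)⁻¹ * a) : ℝ) * 2 ∈ AddSubgroup.zmultiples (2:ℝ) :=
        ⟨round ((2:ℝ)⁻¹ * a), by simp [zsmul_eq_mul]⟩
      have h0 : (((round ((2:ℝ)⁻¹ * a) : ℝ) * 2 : ℝ) : Circle2) = 0 :=
        (QuotientAddGroup.eq_zero_iff _).mpr hmem
      rw [QuotientAddGroup.mk_sub, h0, sub_zero]
    rw [hnorm] at h
    rw [hnorm, ← hzb, fourier_coe_apply]
    have hval : 2 * (π:ℂ) * Complex.I * ((m:ℤ):ℂ) * (b:ℂ) / ((2:ℝ):ℂ)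
        = ((π * m * b : ℝ) : ℂ) * Complex.I := by push_cast; ring
    rw [hval]
    have habs : ‖((π * m * b : ℝ) : ℂ) * Complex.I‖ = π * m * |b| := by
      rw [norm_mul, Complex.norm_I, Complex.norm_real, Real.norm_eq_abs, mul_one, abs_mul,
        abs_of_nonneg (by positivity : (0:ℝ) ≤ π * m)]
    have h1 : ‖((π * m * b : ℝ) : ℂ) * Complex.I‖ ≤ 1 := by rw [habs]; linarith
    have h2 := Complex.norm_exp_sub_one_le h1
    rw [habs] at h2
    calc ‖Complex.exp (((π * m * b : ℝ) : ℂ) * Complex.I) - 1‖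
        = ‖Complex.exp (((π * m * b : ℝ) : ℂ) * Complex.I) - 1‖ := rfl
      _ ≤ 2 * (π * m * |b|) := h2

lemma fourier_grid {m : ℕ} (hm : 0 < m) {y : Circle2} (hy : y ∈ grid m) :
    fourier (m : ℤ) y = 1 := by
  obtain ⟨k, rfl⟩ := hy
  rw [fourier_coe_apply]
  have hm' : (m : ℂ) ≠ 0 := Nat.cast_ne_zero.mpr hm.ne'
  have hval : 2 * (Real.pi:ℂ) * Complex.I * (((m:ℕ):ℤ):ℂ) * ((2 * (k:ℝ) / (m:ℝ) : ℝ) : ℂ)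
      / ((2:ℝ):ℂ) = (k : ℂ) * (2 * (Real.pi:ℂ) * Complex.I) := by
    push_cast
    field_simp
  rw [hval, Complex.exp_int_mul_two_pi_mul_I]

lemma fourier_arg_add (n : ℤ) (a b : Circle2) :
    fourier n (a + b) = fourier n a * fourier n b := by
  simp_rw [fourier_apply, smul_add, AddCircle.toCircle_add, Circle.coe_mul]

lemma norm_fourier_apply (n : ℤ) (x : Circle2) : ‖fourier n x‖ = 1 :=
  Circle.norm_coe _

open Real in
lemma fourier_near_one {m : ℕ} (hm : 0 < m) {δ : ℝ} (hδ : 0 < δ)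
    (hπ : π ≤ (m:ℝ) ^ (δ:ℝ)) {x : Circle2} (hx : x ∈ nbhdGrid m δ) :
    ‖fourier (m : ℤ) x - 1‖ ≤ 2 * π / (m:ℝ) ^ (δ:ℝ) := by
  have hm0 : (0:ℝ) < m := Nat.cast_pos.mpr hm
  have hdpos : (0:ℝ) < (m:ℝ) ^ (δ:ℝ) := Real.rpow_pos_of_pos hm0 _
  have hpow : (m:ℝ) ^ ((1:ℝ)+δ) = m * (m:ℝ)^(δ:ℝ) := by
    rw [Real.rpow_add hm0, Real.rpow_one]
  have hpowpos : 0 < (m:ℝ) ^ ((1:ℝ)+δ) := Real.rpow_pos_of_pos hm0 _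
  have hlt : Metric.infDist x (grid m) < ((m:ℝ) ^ ((1:ℝ)+δ))⁻¹ := by
    refine lt_of_le_of_lt hx ?_
    rw [one_div, ← one_mul ((m:ℝ) ^ ((1:ℝ)+δ))⁻¹]
    rw [mul_inv]
    have : ((2:ℝ))⁻¹ * ((m:ℝ) ^ ((1:ℝ)+δ))⁻¹ < 1 * ((m:ℝ) ^ ((1:ℝ)+δ))⁻¹ := by
      apply mul_lt_mul_of_pos_right (by norm_num) (by positivity)
    exact this
  obtain ⟨y, hy, hdxy⟩ := (Metric.infDist_lt_iff (⟨_, ⟨0, rfl⟩⟩ : (grid m).Nonempty)).mp hlt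
  have key : ‖fourier (m:ℤ) x - 1‖ = ‖fourier (m:ℤ) (x - y) - 1‖ := by
    conv_lhs => rw [show x = (x - y) + y by abel]
    rw [fourier_arg_add, fourier_grid hm hy, mul_one]
  have hxy : ‖x - y‖ < ((m:ℝ) ^ ((1:ℝ)+δ))⁻¹ := by
    rwa [← dist_eq_norm]
  have heq : π * m * ((m:ℝ) ^ ((1:ℝ)+δ))⁻¹ = π / (m:ℝ)^(δ:ℝ) := by
    rw [hpow, mul_inv]
    field_simp
  have hb : π * m * ‖x - y‖ ≤ π / (m:ℝ)^(δ:ℝ) := by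
    rw [← heq]
    have : π * m * ‖x - y‖ ≤ π * m * ((m:ℝ) ^ ((1:ℝ)+δ))⁻¹ := by
      apply mul_le_mul_of_nonneg_left hxy.le (by positivity)
    exact this
  have h1 : π * m * ‖x - y‖ ≤ 1 := hb.trans ((div_le_one hdpos).mpr hπ)
  calc ‖fourier (m:ℤ) x - 1‖ = ‖fourier (m:ℤ) (x - y) - 1‖ := key
    _ ≤ 2 * (π * m * ‖x - y‖) := chord_bound m _ h1
    _ ≤ 2 * (π / (m:ℝ)^(δ:ℝ)) := by linarith
    _ = 2 * π / (m:ℝ)^(δ:ℝ) := by ring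

lemma integrable_contMap (ν : Measure Circle2) [IsFiniteMeasure ν] (f : C(Circle2, ℂ)) :
    Integrable f ν := by
  exact (BoundedContinuousFunction.mkOfCompact f).integrable ν

lemma integral_fourier_diff_bound (ν : Measure Circle2) [IsFiniteMeasure ν]
    {E : Set Circle2} (hν : ν Eᶜ = 0) {n m : ℤ} {ε : ℝ}
    (hb : ∀ x ∈ E, ‖fourier m x - 1‖ ≤ ε) :
    ‖(∫ x, fourier (n + m) x ∂ν) - ∫ x, fourier n x ∂ν‖ ≤ ε * (ν univ).toReal := by
  rw [← integral_sub (integrable_contMap ν _) (integrable_contMap ν _)]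
  refine norm_integral_le_of_norm_le_const ?_
  have hae : ∀ᵐ x ∂ν, x ∈ E := by
    rw [MeasureTheory.ae_iff]
    exact hν
  filter_upwards [hae] with x hx
  have hsplit : fourier (n+m) x - fourier n x = fourier n x * (fourier m x - 1) := by
    rw [fourier_add]; ring
  rw [hsplit, norm_mul, norm_fourier_apply, one_mul]
  exact hb x hx

def Mtot (μ : ComplexMeasure Circle2) : ℝ :=
  (μ.re.toJordanDecomposition.posPart univ).toReal +
  (μ.re.toJordanDecomposition.negPart univ).toReal +
  (μ.im.toJordanDecomposition.posPart univ).toReal +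
  (μ.im.toJordanDecomposition.negPart univ).toReal

lemma parts_null {μ : ComplexMeasure Circle2} {E : Set Circle2} (h : ConcentratedOn μ E) :
    μ.re.toJordanDecomposition.posPart Eᶜ = 0 ∧ μ.re.toJordanDecomposition.negPart Eᶜ = 0 ∧
    μ.im.toJordanDecomposition.posPart Eᶜ = 0 ∧ μ.im.toJordanDecomposition.negPart Eᶜ = 0 := by
  have h' := h
  simp only [ConcentratedOn, cmVariation, SignedMeasure.totalVariation,
    Measure.coe_add, Pi.add_apply, add_eq_zero] at h'
  tauto

lemma cmFourier_diff_bound (μ : ComplexMeasure Circle2) {E : Set Circle2}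
    (hc : ConcentratedOn μ E) {n m : ℤ} {ε : ℝ}
    (hb : ∀ x ∈ E, ‖fourier m x - 1‖ ≤ ε) :
    ‖cmFourierCoeff μ (n + m) - cmFourierCoeff μ n‖ ≤ ε * Mtot μ / 2 := by
  obtain ⟨h1, h2, h3, h4⟩ := parts_null hc
  have b1 := integral_fourier_diff_bound _ h1 (n := n) hb
  have b2 := integral_fourier_diff_bound _ h2 (n := n) hb
  have b3 := integral_fourier_diff_bound _ h3 (n := n) hb
  have b4 := integral_fourier_diff_bound _ h4 (n := n) hb
  set P1 := μ.re.toJordanDecomposition.posPart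
  set N1 := μ.re.toJordanDecomposition.negPart
  set P2 := μ.im.toJordanDecomposition.posPart
  set N2 := μ.im.toJordanDecomposition.negPart
  have hdiff : cmFourierCoeff μ (n + m) - cmFourierCoeff μ n = (1/2 : ℂ) *
      ((((∫ x, fourier (n+m) x ∂P1) - ∫ x, fourier n x ∂P1) -
        ((∫ x, fourier (n+m) x ∂N1) - ∫ x, fourier n x ∂N1)) +
       Complex.I * (((∫ x, fourier (n+m) x ∂P2) - ∫ x, fourier n x ∂P2) -
        ((∫ x, fourier (n+m) x ∂N2) - ∫ x, fourier n x ∂N2))) := by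
    simp only [cmFourierCoeff, cmIntegral]
    ring
  rw [hdiff]
  rw [norm_mul]
  have hhalf : ‖(1/2 : ℂ)‖ = 1/2 := by norm_num
  rw [hhalf]
  have hle : ‖(((∫ x, fourier (n+m) x ∂P1) - ∫ x, fourier n x ∂P1) -
        ((∫ x, fourier (n+m) x ∂N1) - ∫ x, fourier n x ∂N1)) +
       Complex.I * (((∫ x, fourier (n+m) x ∂P2) - ∫ x, fourier n x ∂P2) -
        ((∫ x, fourier (n+m) x ∂N2) - ∫ x, fourier n x ∂N2))‖ ≤
      ε * (P1 univ).toReal + ε * (N1 univ).toReal + ε * (P2 univ).toReal +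
        ε * (N2 univ).toReal := by
    calc _ ≤ ‖(((∫ x, fourier (n+m) x ∂P1) - ∫ x, fourier n x ∂P1) -
        ((∫ x, fourier (n+m) x ∂N1) - ∫ x, fourier n x ∂N1))‖ +
        ‖Complex.I * (((∫ x, fourier (n+m) x ∂P2) - ∫ x, fourier n x ∂P2) -
        ((∫ x, fourier (n+m) x ∂N2) - ∫ x, fourier n x ∂N2))‖ := norm_add_le _ _
      _ ≤ _ := by
        rw [norm_mul, Complex.norm_I, one_mul]
        have t1 := norm_sub_le (((∫ x, fourier (n+m) x ∂P1) - ∫ x, fourier n x ∂P1))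
          (((∫ x, fourier (n+m) x ∂N1) - ∫ x, fourier n x ∂N1))
        have t2 := norm_sub_le (((∫ x, fourier (n+m) x ∂P2) - ∫ x, fourier n x ∂P2))
          (((∫ x, fourier (n+m) x ∂N2) - ∫ x, fourier n x ∂N2))
        linarith
  calc (1/2 : ℝ) * _ ≤ (1/2 : ℝ) * (ε * (P1 univ).toReal + ε * (N1 univ).toReal +
      ε * (P2 univ).toReal + ε * (N2 univ).toReal) := by
        apply mul_le_mul_of_nonneg_left hle (by norm_num)
    _ = ε * Mtot μ / 2 := by rw [Mtot]; ring

def cmIntegralL (μ : ComplexMeasure Circle2) : C(Circle2, ℂ) →ₗ[ℂ] ℂ where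
  toFun f := cmIntegral μ ⇑f
  map_add' f g := by
    simp only [cmIntegral, ContinuousMap.coe_add, Pi.add_apply]
    rw [integral_add (integrable_contMap _ f) (integrable_contMap _ g),
      integral_add (integrable_contMap _ f) (integrable_contMap _ g),
      integral_add (integrable_contMap _ f) (integrable_contMap _ g),
      integral_add (integrable_contMap _ f) (integrable_contMap _ g)]
    ring
  map_smul' c f := by
    simp only [cmIntegral, ContinuousMap.coe_smul, Pi.smul_apply, smul_eq_mul,
      RingHom.id_apply]
    rw [integral_const_mul, integral_const_mul, integral_const_mul, integral_const_mul]
    ring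

lemma cmIntegralL_bound (μ : ComplexMeasure Circle2) (f : C(Circle2, ℂ)) :
    ‖cmIntegralL μ f‖ ≤ Mtot μ * ‖f‖ := by
  have key : ∀ (ν : Measure Circle2) [IsFiniteMeasure ν],
      ‖∫ x, f x ∂ν‖ ≤ (ν univ).toReal * ‖f‖ := by
    intro ν _
    have := (BoundedContinuousFunction.mkOfCompact f).norm_integral_le_mul_norm ν
    simp [BoundedContinuousFunction.norm_mkOfCompact] at this
    exact this
  have k1 := key μ.re.toJordanDecomposition.posPart
  have k2 := key μ.re.toJordanDecomposition.negPart
  have k3 := key μ.im.toJordanDecomposition.posPart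
  have k4 := key μ.im.toJordanDecomposition.negPart
  have expand : cmIntegralL μ f = cmIntegral μ ⇑f := rfl
  rw [expand]
  simp only [cmIntegral]
  calc ‖((∫ x, f x ∂μ.re.toJordanDecomposition.posPart) -
          ∫ x, f x ∂μ.re.toJordanDecomposition.negPart) +
        Complex.I * ((∫ x, f x ∂μ.im.toJordanDecomposition.posPart) -
          ∫ x, f x ∂μ.im.toJordanDecomposition.negPart)‖
      ≤ ‖(∫ x, f x ∂μ.re.toJordanDecomposition.posPart) -
          ∫ x, f x ∂μ.re.toJordanDecomposition.negPart‖ +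
        ‖Complex.I * ((∫ x, f x ∂μ.im.toJordanDecomposition.posPart) -
          ∫ x, f x ∂μ.im.toJordanDecomposition.negPart)‖ := norm_add_le _ _
    _ ≤ Mtot μ * ‖f‖ := by
        rw [norm_mul, Complex.norm_I, one_mul]
        have t1 := norm_sub_le (∫ x, f x ∂μ.re.toJordanDecomposition.posPart)
          (∫ x, f x ∂μ.re.toJordanDecomposition.negPart)
        have t2 := norm_sub_le (∫ x, f x ∂μ.im.toJordanDecomposition.posPart)
          (∫ x, f x ∂μ.im.toJordanDecomposition.negPart)
        have : Mtot μ * ‖f‖ = (μ.re.toJordanDecomposition.posPart univ).toReal * ‖f‖ +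
          (μ.re.toJordanDecomposition.negPart univ).toReal * ‖f‖ +
          (μ.im.toJordanDecomposition.posPart univ).toReal * ‖f‖ +
          (μ.im.toJordanDecomposition.negPart univ).toReal * ‖f‖ := by rw [Mtot]; ring
        rw [this]
        linarith

lemma cmIntegral_contMap_zero (μ : ComplexMeasure Circle2)
    (hz : ∀ n : ℤ, cmIntegral μ (fun x => fourier n x) = 0)
    (f : C(Circle2, ℂ)) : cmIntegral μ ⇑f = 0 := by
  let L : C(Circle2, ℂ) →L[ℂ] ℂ :=
    LinearMap.mkContinuous (cmIntegralL μ) (Mtot μ) (cmIntegralL_bound μ)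
  have hker : Submodule.span ℂ (Set.range (fourier (T := (2:ℝ)))) ≤ LinearMap.ker (L : C(Circle2, ℂ) →ₗ[ℂ] ℂ) := by
    rw [Submodule.span_le]
    rintro g ⟨n, rfl⟩
    exact hz n
  have hclosed : IsClosed ((LinearMap.ker (L : C(Circle2, ℂ) →ₗ[ℂ] ℂ) : Submodule ℂ C(Circle2, ℂ)) : Set C(Circle2, ℂ)) :=
    ContinuousLinearMap.isClosed_ker L
  have htc : (Submodule.span ℂ (Set.range (fourier (T := (2:ℝ))))).topologicalClosure ≤
      LinearMap.ker (L : C(Circle2, ℂ) →ₗ[ℂ] ℂ) :=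
    Submodule.topologicalClosure_minimal _ hker hclosed
  rw [span_fourier_closure_eq_top] at htc
  exact LinearMap.mem_ker.mp (htc (Submodule.mem_top (x := f)))

lemma measure_eq_of_integral_eq (ν₁ ν₂ : Measure Circle2) [IsFiniteMeasure ν₁] [IsFiniteMeasure ν₂]
    (h : ∀ g : C(Circle2, ℝ), ∫ x, g x ∂ν₁ = ∫ x, g x ∂ν₂) : ν₁ = ν₂ := by
  apply MeasureTheory.ext_of_forall_lintegral_eq_of_IsFiniteMeasure
  intro f
  have hg := h ⟨fun x => (f x : ℝ), NNReal.continuous_coe.comp f.continuous⟩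
  have t1 := BoundedContinuousFunction.toReal_lintegral_coe_eq_integral f ν₁
  have t2 := BoundedContinuousFunction.toReal_lintegral_coe_eq_integral f ν₂
  have f1 := BoundedContinuousFunction.lintegral_lt_top_of_nnreal ν₁ f
  have f2 := BoundedContinuousFunction.lintegral_lt_top_of_nnreal ν₂ f
  apply (ENNReal.toReal_eq_toReal_iff' f1.ne f2.ne).mp
  rw [t1, t2]
  exact hg

lemma cm_zero_of_integral_zero (μ : ComplexMeasure Circle2)
    (hz : ∀ n : ℤ, cmIntegral μ (fun x => fourier n x) = 0) : μ = 0 := by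
  have hall := cmIntegral_contMap_zero μ hz
  have hre : ∀ g : C(Circle2, ℝ),
      (∫ x, g x ∂μ.re.toJordanDecomposition.posPart =
        ∫ x, g x ∂μ.re.toJordanDecomposition.negPart) ∧
      (∫ x, g x ∂μ.im.toJordanDecomposition.posPart =
        ∫ x, g x ∂μ.im.toJordanDecomposition.negPart) := by
    intro g
    have h := hall (ContinuousMap.comp ⟨Complex.ofReal, Complex.continuous_ofReal⟩ g)
    simp only [cmIntegral, ContinuousMap.coe_comp, ContinuousMap.coe_mk, Function.comp_apply]
      at h
    have e1 : ∫ x, ((g x : ℝ) : ℂ) ∂μ.re.toJordanDecomposition.posPart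
        = ((∫ x, g x ∂μ.re.toJordanDecomposition.posPart : ℝ) : ℂ) := integral_ofReal
    have e2 : ∫ x, ((g x : ℝ) : ℂ) ∂μ.re.toJordanDecomposition.negPart
        = ((∫ x, g x ∂μ.re.toJordanDecomposition.negPart : ℝ) : ℂ) := integral_ofReal
    have e3 : ∫ x, ((g x : ℝ) : ℂ) ∂μ.im.toJordanDecomposition.posPart
        = ((∫ x, g x ∂μ.im.toJordanDecomposition.posPart : ℝ) : ℂ) := integral_ofReal
    have e4 : ∫ x, ((g x : ℝ) : ℂ) ∂μ.im.toJordanDecomposition.negPart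
        = ((∫ x, g x ∂μ.im.toJordanDecomposition.negPart : ℝ) : ℂ) := integral_ofReal
    rw [e1, e2, e3, e4] at h
    have hre := congrArg Complex.re h
    have him := congrArg Complex.im h
    simp only [Complex.add_re, Complex.sub_re, Complex.ofReal_re, Complex.mul_re, Complex.I_re,
      Complex.I_im, Complex.sub_im, Complex.ofReal_im, Complex.add_im, Complex.mul_im,
      Complex.zero_re, Complex.zero_im] at hre him
    constructor <;> linarith
  have hP1 : μ.re.toJordanDecomposition.posPart = μ.re.toJordanDecomposition.negPart :=
    measure_eq_of_integral_eq _ _ fun g => (hre g).1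
  have hP2 : μ.im.toJordanDecomposition.posPart = μ.im.toJordanDecomposition.negPart :=
    measure_eq_of_integral_eq _ _ fun g => (hre g).2
  have hre0 : μ.re = 0 := by
    have h1 := μ.re.toSignedMeasure_toJordanDecomposition
    rw [JordanDecomposition.toSignedMeasure] at h1
    rw [← h1]
    simp only [hP1, sub_self]
  have him0 : μ.im = 0 := by
    have h1 := μ.im.toSignedMeasure_toJordanDecomposition
    rw [JordanDecomposition.toSignedMeasure] at h1
    rw [← h1]
    simp only [hP2, sub_self]
  have : μ = (MeasureTheory.ComplexMeasure.re μ).toComplexMeasure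
      (MeasureTheory.ComplexMeasure.im μ) := (μ.toComplexMeasure_to_signedMeasure).symm
  rw [this, hre0, him0]
  ext i hi
  rw [SignedMeasure.toComplexMeasure_apply]
  simp only [VectorMeasure.coe_zero, Pi.zero_apply]
  exact Complex.ext rfl rfl

/-- If a closed set `E ⊆ 𝕋` satisfies `E ⊆ A(N_j, δ)` for all `j`, for some `δ > 0` and
strictly increasing sequence of positive integers `(N_j)`, then `E` is parisian. -/
theorem isParisian_of_subset_nbhdGrid (δ : ℝ) (hδ : 0 < δ) (N : ℕ → ℕ)
    (hmono : StrictMono N) (hpos : ∀ j, 0 < N j) (E : Set Circle2) (hE : IsClosed E)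
    (hsub : ∀ j, E ⊆ nbhdGrid (N j) δ) : IsParisian E := by
  intro μ hconc hnac hraj
  apply hnac
  suffices hμ0 : μ = 0 by
    rw [hμ0]; intro s _; simp
  -- Part A: the Fourier coefficients tend to zero along cofinite
  have hozero : ∀ n ∈ (fourierSupport μ)ᶜ, cmFourierCoeff μ n = 0 := by
    intro n hn
    exact not_not.mp hn
  have h1 : Tendsto (cmFourierCoeff μ) (cofinite ⊓ 𝓟 (fourierSupport μ)ᶜ) (𝓝 0) := by
    have hev : ∀ᶠ n in cofinite ⊓ 𝓟 (fourierSupport μ)ᶜ, cmFourierCoeff μ n = 0 :=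
      Eventually.filter_mono inf_le_right (eventually_principal.mpr hozero)
    exact Tendsto.congr' (hev.mono fun n h => h.symm) tendsto_const_nhds
  have h2 := hraj μ h1
  have hsplit : (cofinite : Filter ℤ) =
      (cofinite ⊓ 𝓟 (fourierSupport μ)) ⊔ (cofinite ⊓ 𝓟 (fourierSupport μ)ᶜ) := by
    rw [← inf_sup_left, sup_principal, union_compl_self, principal_univ, inf_top_eq]
  have htend : Tendsto (cmFourierCoeff μ) cofinite (𝓝 0) := by
    rw [hsplit]
    exact Tendsto.sup h2 h1
  -- auxiliary limits
  have hNtop : Tendsto (fun j => (N j : ℝ)) atTop atTop :=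
    tendsto_natCast_atTop_atTop.comp hmono.tendsto_atTop
  have hpowtop : Tendsto (fun j => ((N j : ℝ)) ^ (δ:ℝ)) atTop atTop :=
    (tendsto_rpow_atTop hδ).comp hNtop
  have hεlim : Tendsto (fun j => 2 * Real.pi / ((N j : ℝ)) ^ (δ:ℝ) * Mtot μ / 2)
      atTop (𝓝 0) := by
    have h0 : Tendsto (fun j => 2 * Real.pi / ((N j : ℝ)) ^ (δ:ℝ)) atTop (𝓝 0) :=
      Tendsto.div_atTop tendsto_const_nhds hpowtop
    have := (h0.mul_const (Mtot μ)).div_const 2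
    simpa using this
  -- every Fourier coefficient vanishes
  have hcoeff : ∀ n : ℤ, cmFourierCoeff μ n = 0 := by
    intro n
    have hNint : Tendsto (fun j => (n + (N j : ℤ))) atTop atTop :=
      tendsto_atTop_add_const_left _ n
        (tendsto_natCast_atTop_atTop.comp hmono.tendsto_atTop)
    have hlim1 : Tendsto (fun j => cmFourierCoeff μ (n + (N j : ℤ))) atTop (𝓝 0) :=
      htend.comp (hNint.mono_right atTop_le_cofinite)
    -- the coefficients along n + N j converge to the coefficient at n
    have hdiff : Tendsto (fun j => cmFourierCoeff μ (n + (N j : ℤ)) - cmFourierCoeff μ n)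
        atTop (𝓝 0) := by
      refine squeeze_zero_norm' (a := fun j => 2 * Real.pi / ((N j : ℝ)) ^ (δ:ℝ) * Mtot μ / 2)
        ?_ hεlim
      · filter_upwards [hpowtop.eventually_ge_atTop Real.pi] with j hj
        have hb : ∀ x ∈ E, ‖fourier ((N j : ℕ) : ℤ) x - 1‖ ≤
            2 * Real.pi / ((N j : ℝ)) ^ (δ:ℝ) := fun x hx =>
          fourier_near_one (hpos j) hδ hj (hsub j hx)
        have hbb := cmFourier_diff_bound μ hconc (n := n) hb
        simpa using hbb
    have hlim2 : Tendsto (fun j => cmFourierCoeff μ (n + (N j : ℤ))) atTop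
        (𝓝 (cmFourierCoeff μ n)) := by
      have := hdiff.const_add (cmFourierCoeff μ n)
      simpa using this
    exact tendsto_nhds_unique hlim2 hlim1
  -- conclude μ = 0
  apply cm_zero_of_integral_zero
  intro n
  have h := hcoeff n
  rw [cmFourierCoeff] at h
  have : (1/2 : ℂ) ≠ 0 := by norm_num
  exact (mul_eq_zero.mp h).resolve_left this


end
end

section
/- Let δ > 0 and let (N_j)_{j≥1} be a strictly increasing sequence of positive integers. Then the Borel set Ẽ = {x ∈ 𝕋 : sup_j N_j^{1+δ}·dist(x, (2/N_j)ℤ) < ∞} is a parisian set. -/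
open MeasureTheory Filter Metric Set

noncomputable section

open scoped BoundedContinuousFunction NNReal

open scoped BoundedContinuousFunction NNReal in
lemma aux_lift_norm (z : Circle2) : ∃ a : ℝ, z = (a : Circle2) ∧ |a| = ‖z‖ := by
  obtain ⟨b, rfl⟩ := QuotientAddGroup.mk_surjective z
  refine ⟨b - round ((2:ℝ)⁻¹ * b) * 2, ?_, ?_⟩
  · have : ((b - round ((2:ℝ)⁻¹ * b) * 2 : ℝ) : Circle2) = (b : Circle2) := by
      rw [AddCircle.coe_sub]
      simp only [sub_eq_self]
      rw [AddCircle.coe_eq_zero_iff]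
      exact ⟨round ((2:ℝ)⁻¹ * b), by push_cast [zsmul_eq_mul]; ring⟩
    exact this.symm
  · rw [AddCircle.norm_eq]

lemma aux_fourier_rep (n : ℕ) (hn : 0 < n) (k : ℤ) (a : ℝ) :
    fourier (n : ℤ) ((2 * k / n + a : ℝ) : Circle2) = Complex.exp (Real.pi * n * a * Complex.I) := by
  have hn' : (n:ℂ) ≠ 0 := Nat.cast_ne_zero.mpr hn.ne'
  rw [fourier_coe_apply]
  push_cast
  rw [show 2 * Real.pi * Complex.I * (n:ℂ) * (2 * (k:ℂ) / (n:ℂ) + a) / 2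
      = (k:ℂ) * (2 * Real.pi * Complex.I) + Real.pi * n * a * Complex.I by field_simp]
  rw [Complex.exp_add, Complex.exp_int_mul_two_pi_mul_I, one_mul]

lemma aux_abs_pi_n_a (n : ℕ) (a : ℝ) :
    ‖((Real.pi : ℂ) * n * a * Complex.I)‖ = Real.pi * ((n : ℝ) * |a|) := by
  simp [Complex.norm_real, Complex.norm_natCast, Complex.norm_I,
    abs_of_nonneg Real.pi_pos.le, mul_assoc]

lemma aux_norm_fourier (n : ℤ) (x : Circle2) : ‖(fourier n x : ℂ)‖ = 1 := by
  rw [fourier_apply]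
  exact Circle.norm_coe _

lemma aux_tendsto_fourier_one (δ : ℝ) (hδ : 0 < δ) (N : ℕ → ℕ)
    (hmono : StrictMono N) (hpos : ∀ j, 0 < N j) (x : Circle2) (hx : x ∈ Etilde N δ) :
    Filter.Tendsto (fun j => (fourier ((N j : ℕ) : ℤ) x : ℂ)) atTop (nhds 1) := by
  obtain ⟨C, hC⟩ := hx
  set C' : ℝ := max C 0 + 1 with hC'def
  have hC'pos : 0 < C' := by positivity
  have key : ∀ j, ∃ a : ℝ,
      fourier ((N j : ℕ) : ℤ) x = Complex.exp (Real.pi * (N j) * a * Complex.I) ∧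
      (N j : ℝ) * |a| ≤ C' * (N j : ℝ) ^ (-δ) := by
    intro j
    have hnpos : (0:ℝ) < (N j : ℝ) := Nat.cast_pos.mpr (hpos j)
    have hrpos : (0:ℝ) < (N j : ℝ) ^ ((1:ℝ) + δ) := Real.rpow_pos_of_pos hnpos _
    have hd : Metric.infDist x (grid (N j)) < C' / (N j : ℝ) ^ ((1:ℝ) + δ) := by
      rw [lt_div_iff₀ hrpos]
      calc Metric.infDist x (grid (N j)) * (N j : ℝ) ^ ((1:ℝ) + δ)
          = (N j : ℝ) ^ ((1:ℝ) + δ) * Metric.infDist x (grid (N j)) := by ring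
        _ ≤ C := hC j
        _ < C' := by simp only [hC'def]; nlinarith [le_max_left C (0:ℝ)]
    have hne : (grid (N j)).Nonempty := ⟨_, Set.mem_range.mpr ⟨0, rfl⟩⟩
    obtain ⟨y, hy, hxy⟩ := (Metric.infDist_lt_iff hne).mp hd
    obtain ⟨k, rfl⟩ := hy
    simp only at hxy
    obtain ⟨a, ha, hna⟩ := aux_lift_norm (x - ((2 * k / (N j) : ℝ) : Circle2))
    have hxrep : x = ((2 * k / (N j) + a : ℝ) : Circle2) := by
      have : x = ((2 * k / (N j) : ℝ) : Circle2) + (a : Circle2) := by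
        rw [← ha]; abel
      rw [this, ← AddCircle.coe_add]
    refine ⟨a, by rw [hxrep]; exact aux_fourier_rep (N j) (hpos j) k a, ?_⟩
    have haB : |a| ≤ C' / (N j : ℝ) ^ ((1:ℝ) + δ) := by
      rw [hna, ← dist_eq_norm]
      exact hxy.le
    calc (N j : ℝ) * |a| ≤ (N j : ℝ) * (C' / (N j : ℝ) ^ ((1:ℝ) + δ)) :=
          mul_le_mul_of_nonneg_left haB (le_of_lt hnpos)
      _ = C' * (N j : ℝ) ^ (-δ) := by
          rw [Real.rpow_add hnpos, Real.rpow_one, Real.rpow_neg (le_of_lt hnpos)]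
          field_simp
  choose a hfa hbound using key
  have hNtop : Filter.Tendsto (fun j => (N j : ℝ)) atTop atTop :=
    tendsto_natCast_atTop_atTop.comp hmono.tendsto_atTop
  have hg : Filter.Tendsto (fun j => 2 * Real.pi * (C' * (N j : ℝ) ^ (-δ))) atTop (nhds 0) := by
    have h1 : Filter.Tendsto (fun j => (N j : ℝ) ^ (-δ)) atTop (nhds 0) :=
      (tendsto_rpow_neg_atTop hδ).comp hNtop
    have := h1.const_mul (2 * Real.pi * C')
    simpa [mul_assoc] using this
  have hsq : Filter.Tendsto (fun j => (fourier ((N j : ℕ) : ℤ) x : ℂ) - 1) atTop (nhds 0) := by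
    apply squeeze_zero_norm' _ hg
    have hev : ∀ᶠ j in atTop, Real.pi * ((N j : ℝ) * |a j|) ≤ 1 := by
      have h2 := hg.const_mul (2⁻¹ : ℝ)
      rw [mul_zero] at h2
      filter_upwards [h2.eventually (eventually_le_nhds (by norm_num : (0:ℝ) < 1))] with j hj
      calc Real.pi * ((N j:ℝ) * |a j|) ≤ Real.pi * (C' * (N j:ℝ) ^ (-δ)) :=
            mul_le_mul_of_nonneg_left (hbound j) Real.pi_pos.le
        _ = 2⁻¹ * (2 * Real.pi * (C' * (N j:ℝ) ^ (-δ))) := by ring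
        _ ≤ 1 := hj
    filter_upwards [hev] with j hj
    rw [hfa j]
    have habs : ‖((Real.pi:ℂ) * (N j) * (a j) * Complex.I)‖ ≤ 1 := by
      rw [aux_abs_pi_n_a]; exact hj
    calc ‖Complex.exp ((Real.pi:ℂ) * (N j) * (a j) * Complex.I) - 1‖
        ≤ 2 * ‖((Real.pi:ℂ) * (N j) * (a j) * Complex.I)‖ :=
          Complex.norm_exp_sub_one_le habs
      _ ≤ 2 * Real.pi * (C' * (N j:ℝ) ^ (-δ)) := by
          rw [aux_abs_pi_n_a, mul_assoc]
          have : Real.pi * ((N j:ℝ) * |a j|) ≤ Real.pi * (C' * (N j:ℝ) ^ (-δ)) :=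
            mul_le_mul_of_nonneg_left (hbound j) Real.pi_pos.le
          linarith
  have := hsq.add (tendsto_const_nhds (x := (1:ℂ)))
  simpa using this

-- integrability of continuous functions
lemma aux_integrable (P : Measure Circle2) [IsFiniteMeasure P] (f : C(Circle2, ℂ)) :
    Integrable f P :=
  Continuous.integrable_of_hasCompactSupport f.continuous (HasCompactSupport.of_compactSpace f)

lemma aux_norm_integral_le (P : Measure Circle2) [IsFiniteMeasure P] (f : C(Circle2, ℂ)) :
    ‖∫ x, f x ∂P‖ ≤ (P Set.univ).toReal * ‖f‖ := by
  calc ‖∫ x, f x ∂P‖ ≤ ∫ x, ‖f x‖ ∂P := norm_integral_le_integral_norm _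
    _ ≤ ∫ _, ‖f‖ ∂P := by
        apply integral_mono (aux_integrable P f).norm (integrable_const _)
        exact fun x => f.norm_coe_le_norm x
    _ = (P Set.univ).toReal * ‖f‖ := by rw [integral_const, smul_eq_mul]; rfl

lemma aux_sm_zero (s : MeasureTheory.SignedMeasure Circle2)
    (hc : s.toJordanDecomposition.posPart = s.toJordanDecomposition.negPart) : s = 0 := by
  ext i hi
  have h' : s i = s.toJordanDecomposition.toSignedMeasure i := by
    rw [s.toSignedMeasure_toJordanDecomposition]
  rw [VectorMeasure.zero_apply, h', JordanDecomposition.toSignedMeasure,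
    VectorMeasure.sub_apply, Measure.toSignedMeasure_apply_measurable hi,
    Measure.toSignedMeasure_apply_measurable hi, hc, sub_self]

/-- If all Fourier coefficients vanish, the complex measure is zero. -/
lemma aux_eq_zero_of_coeffs (μ : ComplexMeasure Circle2)
    (h : ∀ n : ℤ, cmFourierCoeff μ n = 0) : μ = 0 := by
  set P1 := μ.re.toJordanDecomposition.posPart
  set N1 := μ.re.toJordanDecomposition.negPart
  set P2 := μ.im.toJordanDecomposition.posPart
  set N2 := μ.im.toJordanDecomposition.negPart
  -- the linear functional
  have hadd : ∀ (f g : C(Circle2, ℂ)),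
      cmIntegral μ (⇑(f + g)) = cmIntegral μ f + cmIntegral μ g := by
    intro f g
    simp only [cmIntegral, ContinuousMap.coe_add, Pi.add_apply]
    rw [integral_add (aux_integrable P1 f) (aux_integrable P1 g),
        integral_add (aux_integrable N1 f) (aux_integrable N1 g),
        integral_add (aux_integrable P2 f) (aux_integrable P2 g),
        integral_add (aux_integrable N2 f) (aux_integrable N2 g)]
    ring
  have hsmul : ∀ (c : ℂ) (f : C(Circle2, ℂ)),
      cmIntegral μ (⇑(c • f)) = c * cmIntegral μ f := by
    intro c f
    simp only [cmIntegral, ContinuousMap.coe_smul, Pi.smul_apply, smul_eq_mul]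
    rw [integral_const_mul, integral_const_mul, integral_const_mul, integral_const_mul]
    ring
  let T : C(Circle2, ℂ) →ₗ[ℂ] ℂ :=
    { toFun := fun f => cmIntegral μ f
      map_add' := hadd
      map_smul' := fun c f => by simpa using hsmul c f }
  set M : ℝ := (P1 Set.univ).toReal + (N1 Set.univ).toReal +
      ((P2 Set.univ).toReal + (N2 Set.univ).toReal) with hM
  have hbound : ∀ f : C(Circle2, ℂ), ‖T f‖ ≤ M * ‖f‖ := by
    intro f
    have h1 := aux_norm_integral_le P1 f
    have h2 := aux_norm_integral_le N1 f
    have h3 := aux_norm_integral_le P2 f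
    have h4 := aux_norm_integral_le N2 f
    have : ‖T f‖ ≤ ‖∫ x, f x ∂P1‖ + ‖∫ x, f x ∂N1‖ + (‖∫ x, f x ∂P2‖ + ‖∫ x, f x ∂N2‖) := by
      simp only [T, cmIntegral, LinearMap.coe_mk, AddHom.coe_mk]
      calc ‖(∫ x, f x ∂P1) - (∫ x, f x ∂N1) +
            Complex.I * ((∫ x, f x ∂P2) - (∫ x, f x ∂N2))‖
          ≤ ‖(∫ x, f x ∂P1) - (∫ x, f x ∂N1)‖ +
            ‖Complex.I * ((∫ x, f x ∂P2) - (∫ x, f x ∂N2))‖ := norm_add_le _ _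
        _ ≤ ‖∫ x, f x ∂P1‖ + ‖∫ x, f x ∂N1‖ + (‖∫ x, f x ∂P2‖ + ‖∫ x, f x ∂N2‖) := by
            rw [norm_mul, Complex.norm_I, one_mul]
            have := norm_sub_le (∫ x, f x ∂P1) (∫ x, f x ∂N1)
            have := norm_sub_le (∫ x, f x ∂P2) (∫ x, f x ∂N2)
            linarith
    calc ‖T f‖ ≤ ‖∫ x, f x ∂P1‖ + ‖∫ x, f x ∂N1‖ + (‖∫ x, f x ∂P2‖ + ‖∫ x, f x ∂N2‖) := this
      _ ≤ M * ‖f‖ := by rw [hM]; nlinarith [norm_nonneg f]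
  let T' : C(Circle2, ℂ) →L[ℂ] ℂ := LinearMap.mkContinuous T M hbound
  have hker : ∀ f : C(Circle2, ℂ), T' f = 0 := by
    have hspan : Submodule.span ℂ (Set.range (@fourier 2)) ≤ T'.ker := by
      rw [Submodule.span_le]
      rintro _ ⟨n, rfl⟩
      have hn := h n
      rw [cmFourierCoeff] at hn
      have : cmIntegral μ (fun x => fourier n x) = 0 := by
        field_simp at hn
        simpa using hn
      show T' (fourier n) = 0
      exact this
    have hclosed : IsClosed (T'.ker : Set C(Circle2, ℂ)) :=
      ContinuousLinearMap.isClosed_ker T'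
    have htop : (Submodule.span ℂ (Set.range (@fourier 2))).topologicalClosure ≤
        T'.ker := Submodule.topologicalClosure_minimal _ hspan hclosed
    rw [span_fourier_closure_eq_top] at htop
    intro f
    exact htop (Submodule.mem_top : f ∈ (⊤ : Submodule ℂ C(Circle2, ℂ)))
  have hint : ∀ f : C(Circle2, ℂ), cmIntegral μ f = 0 := by
    intro f
    have := hker f
    simpa [T', T, LinearMap.mkContinuous_apply] using this
  -- deduce equality of the four measures pairwise
  have hpair : P1 = N1 ∧ P2 = N2 := by
    have key : ∀ f : Circle2 →ᵇ NNReal,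
        (∫⁻ x, f x ∂P1 = ∫⁻ x, f x ∂N1) ∧ (∫⁻ x, f x ∂P2 = ∫⁻ x, f x ∂N2) := by
      intro f
      set fC : C(Circle2, ℂ) :=
        ⟨fun x => ((f x : ℝ) : ℂ), by
          refine Complex.continuous_ofReal.comp ?_
          exact NNReal.continuous_coe.comp f.continuous⟩ with hfC
      have h0 := hint fC
      have hre : ∀ P : Measure Circle2, ∫ x, fC x ∂P = ((∫ x, (f x : ℝ) ∂P : ℝ) : ℂ) := by
        intro P
        simp only [hfC, ContinuousMap.coe_mk]
        exact integral_ofReal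
      rw [cmIntegral, hre P1, hre N1, hre P2, hre N2] at h0
      have hre0 : (∫ x, (f x : ℝ) ∂P1) = ∫ x, (f x : ℝ) ∂N1 := by
        have := congrArg Complex.re h0
        exact sub_eq_zero.mp (by simpa using this)
      have him0 : (∫ x, (f x : ℝ) ∂P2) = ∫ x, (f x : ℝ) ∂N2 := by
        have := congrArg Complex.im h0
        exact sub_eq_zero.mp (by simpa using this)
      constructor
      · have e1 := BoundedContinuousFunction.toReal_lintegral_coe_eq_integral f P1
        have e2 := BoundedContinuousFunction.toReal_lintegral_coe_eq_integral f N1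
        have fin1 := BoundedContinuousFunction.lintegral_lt_top_of_nnreal P1 f
        have fin2 := BoundedContinuousFunction.lintegral_lt_top_of_nnreal N1 f
        rw [← ENNReal.toReal_eq_toReal_iff' fin1.ne fin2.ne, e1, e2]
        exact hre0
      · have e1 := BoundedContinuousFunction.toReal_lintegral_coe_eq_integral f P2
        have e2 := BoundedContinuousFunction.toReal_lintegral_coe_eq_integral f N2
        have fin1 := BoundedContinuousFunction.lintegral_lt_top_of_nnreal P2 f
        have fin2 := BoundedContinuousFunction.lintegral_lt_top_of_nnreal N2 f
        rw [← ENNReal.toReal_eq_toReal_iff' fin1.ne fin2.ne, e1, e2]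
        exact him0
    constructor
    · exact ext_of_forall_lintegral_eq_of_IsFiniteMeasure (fun f => (key f).1)
    · exact ext_of_forall_lintegral_eq_of_IsFiniteMeasure (fun f => (key f).2)
  have hre0 : μ.re = 0 := aux_sm_zero _ hpair.1
  have him0 : μ.im = 0 := aux_sm_zero _ hpair.2
  ext s hs
  have h1 : μ.re s = 0 := by rw [hre0]; rfl
  have h2 : μ.im s = 0 := by rw [him0]; rfl
  rw [MeasureTheory.ComplexMeasure.re_apply] at h1
  rw [MeasureTheory.ComplexMeasure.im_apply] at h2
  rw [VectorMeasure.zero_apply]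
  exact Complex.ext (by exact h1) (by exact h2)

/-- Dominated convergence. -/
lemma aux_tendsto_int (P : Measure Circle2) [IsFiniteMeasure P] (N : ℕ → ℕ)
    (hP : ∀ᵐ x ∂P, Filter.Tendsto (fun j => (fourier ((N j : ℕ) : ℤ) x : ℂ)) atTop (nhds 1))
    (m : ℤ) :
    Filter.Tendsto (fun j => ∫ x, (fourier (((N j : ℕ) : ℤ) + m) x : ℂ) ∂P) atTop
      (nhds (∫ x, (fourier m x : ℂ) ∂P)) := by
  apply tendsto_integral_of_dominated_convergence (fun _ => (1:ℝ))
  · exact fun j => ((fourier (((N j : ℕ) : ℤ) + m)).continuous.aestronglyMeasurable)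
  · exact integrable_const _
  · intro j
    exact Eventually.of_forall fun x => le_of_eq (aux_norm_fourier _ x)
  · filter_upwards [hP] with x hx
    have : ∀ j, (fourier (((N j : ℕ) : ℤ) + m) x : ℂ) =
        (fourier ((N j : ℕ) : ℤ) x : ℂ) * fourier m x := fun j => fourier_add
    simp only [this]
    have := hx.mul_const ((fourier m x : ℂ))
    simpa using this


/-- For `δ > 0` and a strictly increasing sequence of positive integers `(N_j)`, the set
`Ẽ = {x : sup_j N_j^{1+δ}·dist(x, (2/N_j)ℤ) < ∞}` is parisian. -/
theorem isParisian_Etilde (δ : ℝ) (hδ : 0 < δ) (N : ℕ → ℕ)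
    (hmono : StrictMono N) (hpos : ∀ j, 0 < N j) : IsParisian (Etilde N δ) := by
  intro μ hconc hna hraj
  set Λ := fourierSupport μ with hΛ
  -- trivial convergence off the support
  have h0 : Tendsto (cmFourierCoeff μ) (Filter.cofinite ⊓ Filter.principal Λᶜ) (nhds 0) := by
    have hev : ∀ᶠ n in Filter.cofinite ⊓ Filter.principal Λᶜ, cmFourierCoeff μ n = 0 := by
      rw [eventually_inf_principal]
      exact Eventually.of_forall fun n hn => not_not.mp hn
    exact Tendsto.congr' (hev.mono fun n h => h.symm) tendsto_const_nhds
  have h1 := hraj μ h0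
  -- combine to cofinite convergence
  have hcof : Tendsto (cmFourierCoeff μ) Filter.cofinite (nhds 0) := by
    intro U hU
    have hU1 : (cmFourierCoeff μ) ⁻¹' U ∈ Filter.cofinite ⊓ Filter.principal Λ := h1 hU
    have hU2 : (cmFourierCoeff μ) ⁻¹' U ∈ Filter.cofinite ⊓ Filter.principal Λᶜ := h0 hU
    rw [Filter.mem_inf_principal] at hU1 hU2
    rw [Filter.mem_map]
    refine Filter.mem_of_superset (Filter.inter_mem hU1 hU2) ?_
    intro n hn
    by_cases hnΛ : n ∈ Λ
    · exact hn.1 hnΛ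
    · exact hn.2 hnΛ
  -- a.e. convergence of fourier (N j) to 1 for each part
  have hvar : cmVariation μ (Etilde N δ)ᶜ = 0 := hconc
  rw [cmVariation, Measure.add_apply] at hvar
  rw [SignedMeasure.totalVariation, SignedMeasure.totalVariation, Measure.add_apply,
      Measure.add_apply] at hvar
  have hzero : μ.re.toJordanDecomposition.posPart (Etilde N δ)ᶜ = 0 ∧
      μ.re.toJordanDecomposition.negPart (Etilde N δ)ᶜ = 0 ∧
      μ.im.toJordanDecomposition.posPart (Etilde N δ)ᶜ = 0 ∧
      μ.im.toJordanDecomposition.negPart (Etilde N δ)ᶜ = 0 := by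
    constructor
    · exact le_antisymm (le_trans (le_trans le_self_add le_self_add) hvar.le) zero_le
    constructor
    · exact le_antisymm (le_trans (le_trans le_add_self le_self_add) hvar.le) zero_le
    constructor
    · exact le_antisymm (le_trans (le_trans le_self_add le_add_self) hvar.le) zero_le
    · exact le_antisymm (le_trans (le_trans le_add_self le_add_self) hvar.le) zero_le
  have hae : ∀ (P : Measure Circle2), P (Etilde N δ)ᶜ = 0 →
      ∀ᵐ x ∂P, Filter.Tendsto (fun j => (fourier ((N j : ℕ) : ℤ) x : ℂ)) atTop (nhds 1) := by
    intro P hP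
    have hmem : ∀ᵐ x ∂P, x ∈ Etilde N δ := by
      rw [MeasureTheory.ae_iff]
      exact hP
    filter_upwards [hmem] with x hx
    exact aux_tendsto_fourier_one δ hδ N hmono hpos x hx
  -- the coefficients all vanish
  have hm : ∀ m : ℤ, cmFourierCoeff μ m = 0 := by
    intro m
    have hinj : Function.Injective (fun j : ℕ => ((N j : ℤ) + m)) := by
      intro a b hab
      simp only [add_left_inj, Int.ofNat_inj] at hab
      exact hmono.injective (by exact_mod_cast hab)
    have hmap : Tendsto (fun j : ℕ => ((N j : ℤ) + m)) atTop Filter.cofinite := by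
      rw [← Nat.cofinite_eq_atTop]
      exact hinj.tendsto_cofinite
    have v1 : Tendsto (fun j => cmFourierCoeff μ ((N j : ℤ) + m)) atTop (nhds 0) :=
      hcof.comp hmap
    have v2 : Tendsto (fun j => cmFourierCoeff μ ((N j : ℤ) + m)) atTop
        (nhds (cmFourierCoeff μ m)) := by
      simp only [cmFourierCoeff, cmIntegral]
      have t1 := aux_tendsto_int _ N (hae _ hzero.1) m
      have t2 := aux_tendsto_int _ N (hae _ hzero.2.1) m
      have t3 := aux_tendsto_int _ N (hae _ hzero.2.2.1) m
      have t4 := aux_tendsto_int _ N (hae _ hzero.2.2.2) m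
      exact (((t1.sub t2).add ((t3.sub t4).const_mul Complex.I)).const_mul _)
    exact tendsto_nhds_unique v2 v1
  have hμ0 : μ = 0 := aux_eq_zero_of_coeffs μ hm
  apply hna
  intro s hs
  rw [hμ0]
  rfl

end
end
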